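/- Depth bound (Theorem 3.1(iii)): for any strings T, w over the alphabet A with w nonempty, if w is represented in T then there exists a nonempty string u (namely the prefix of w of length ⌈|w|/2⌉) such that u occurs in T at least |u| times and |w| ≤ 2|u|. In particular, the length of any string represented in T is at most 2·h(T), where h(T) is the maximum length of a substring of T that occurs in T at least as many times as its length. -/

import Mathlib

/-- `w` occurs in `T` at the (1-indexed) position `p`, i.e. `1 ≤ p ≤ |T| - |w| + 1`
and `T[p..p+|w|-1] = w`. -/
def OccursAt {A : Type*} (T w : List A) (p : ℕ) : Prop :=
  1 ≤ p ∧ p + w.length ≤ T.length + 1 ∧ (T.drop (p - 1)).take w.length = w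

/-- `w` is represented in `T`: there are positions `p 1 < p 2 < ... < p |w|` such that
for each `1 ≤ ℓ ≤ |w|`, the prefix `w[1..ℓ]` occurs in `T` at position `p ℓ`. -/
def Represented {A : Type*} (T w : List A) : Prop :=
  ∃ p : ℕ → ℕ,
    (∀ i j, 1 ≤ i → i < j → j ≤ w.length → p i < p j) ∧
    (∀ ℓ, 1 ≤ ℓ → ℓ ≤ w.length → OccursAt T (w.take ℓ) (p ℓ))

/-- Depth bound (Theorem 3.1(iii)): if a nonempty `w` is represented in `T`, then its
prefix `u` of length `⌈|w|/2⌉` is nonempty, occurs in `T` at least `|u|` times, and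
`|w| ≤ 2|u|`.  In particular, `|w| ≤ 2·h(T)` where `h(T)` bounds the length of every
substring of `T` occurring in `T` at least as many times as its length. -/
theorem depth_bound {A : Type*} (T w : List A)
    (hne : w ≠ []) (hw : Represented T w) :
    (∃ u : List A, u = w.take ((w.length + 1) / 2) ∧ u ≠ [] ∧
      u.length ≤ {p : ℕ | OccursAt T u p}.ncard ∧ w.length ≤ 2 * u.length) ∧
    (∀ h : ℕ,
      (∀ x : List A, x <:+: T → x.length ≤ {p : ℕ | OccursAt T x p}.ncard →
        x.length ≤ h) →
      w.length ≤ 2 * h) := by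
  obtain ⟨p, hmono, hocc⟩ := hw
  set n := w.length with hn
  have hn1 : 1 ≤ n := List.length_pos_iff.mpr hne
  set m := (n + 1) / 2 with hm
  have hm1 : 1 ≤ m := by omega
  have hmn : m ≤ n := by omega
  set u := w.take m with hu
  have hul : u.length = m := by
    simp only [hu, List.length_take]
    omega
  -- u occurs at p ℓ for each m ≤ ℓ ≤ n
  have key : ∀ ℓ, m ≤ ℓ → ℓ ≤ n → OccursAt T u (p ℓ) := by
    intro ℓ h1 h2
    obtain ⟨a, b, c⟩ := hocc ℓ (by omega) h2
    have hlen : (w.take ℓ).length = ℓ := by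
      simp only [List.length_take]; omega
    refine ⟨a, by omega, ?_⟩
    have := congrArg (fun l => List.take m l) c
    simp only [List.take_take, hlen, min_eq_left h1] at this
    rw [hul]
    exact this
  -- the occurrence set is finite
  have hfin : {q : ℕ | OccursAt T u q}.Finite := by
    apply (Set.finite_Icc 1 (T.length + 1)).subset
    rintro q ⟨a, b, -⟩
    exact ⟨a, by omega⟩
  -- lower bound on number of occurrences
  have hcard : m ≤ {q : ℕ | OccursAt T u q}.ncard := by
    have hinj : Set.InjOn p (Finset.Icc m n) := by
      intro i hi j hj hij
      simp only [Finset.coe_Icc, Set.mem_Icc] at hi hj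
      by_contra hne'
      rcases lt_or_gt_of_ne hne' with h' | h'
      · exact absurd hij (ne_of_lt (hmono i j (by omega) h' hj.2))
      · exact absurd hij.symm (ne_of_lt (hmono j i (by omega) h' hi.2))
    have hsub : ↑((Finset.Icc m n).image p) ⊆ {q : ℕ | OccursAt T u q} := by
      intro q hq
      simp only [Finset.coe_image, Set.mem_image, Finset.coe_Icc, Set.mem_Icc] at hq
      obtain ⟨ℓ, ⟨h1, h2⟩, rfl⟩ := hq
      exact key ℓ h1 h2
    have h1 : ((Finset.Icc m n).image p).card = n - m + 1 := by
      rw [Finset.card_image_of_injOn hinj, Nat.card_Icc]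
      omega
    have h2 := Set.ncard_le_ncard hsub hfin
    rw [Set.ncard_coe_finset, h1] at h2
    omega
  have hune : u ≠ [] := by
    intro h'
    rw [h'] at hul
    simp at hul
    omega
  constructor
  · exact ⟨u, rfl, hune, by rw [hul]; exact hcard, by omega⟩
  · intro h hh
    have hinf : u <:+: T := by
      obtain ⟨a, b, c⟩ := key m le_rfl hmn
      rw [← c]
      exact ((List.take_prefix _ _).isInfix).trans (List.drop_suffix _ _).isInfix
    have := hh u hinf (by rw [hul]; exact hcard)
    rw [hul] at this
    omega
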